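/- Let f : ℝ → ℝ be given by f(y) = m·y for some m ≠ 0, let B = graph(f) ⊂ ℝ² and A = ℝ × {0}. Then V(y,ρ) := (y² + ρ²)/2 satisfies the tangency (spiraling) condition for the Douglas–Rachford operator T_{A,B}: for every x ∈ ℝ², ⟨∇V(T_{A,B}x), x − T_{A,B}x⟩ = 0. -/

import Mathlib

open scoped RealInnerProductSpace

lemma grad_half_inner {F : Type*} [NormedAddCommGroup F] [InnerProductSpace ℝ F]
    [CompleteSpace F] (y : F) :
    HasGradientAt (fun x : F => (⟪x, x⟫ : ℝ) / 2) y y := by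
  rw [hasGradientAt_iff_hasFDerivAt]
  have h := ((hasFDerivAt_id y).inner ℝ (hasFDerivAt_id y)).const_smul (2:ℝ)⁻¹
  have h2 : (fun x : F => (⟪x, x⟫ : ℝ) / 2) =
      fun x : F => (2:ℝ)⁻¹ • (⟪(id x : F), (id x : F)⟫ : ℝ) := by
    funext x; simp [smul_eq_mul]; ring
  rw [h2]
  refine h.congr_fderiv ?_
  ext v
  simp [fderivInnerCLM_apply, real_inner_comm y v, smul_eq_mul]
  ring

/-- For the line `A = ℝ × {0}` and the line `B = graph(y ↦ my)` (`m ≠ 0`) in `ℝ²`,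
the Lyapunov function `V(y,ρ) = (y² + ρ²)/2` satisfies the spiraling condition for the
Douglas–Rachford operator `T_{A,B}`: `⟪∇V(T_{A,B}x), x - T_{A,B}x⟫ = 0` for all `x`. -/
theorem two_lines_spiraling
    (m : ℝ) (hm : m ≠ 0)
    (PA PB RA RB T : WithLp 2 (ℝ × ℝ) → WithLp 2 (ℝ × ℝ))
    (hPA : ∀ x, PA x = (WithLp.equiv 2 (ℝ × ℝ)).symm ((WithLp.equiv 2 (ℝ × ℝ) x).1, 0))
    (hPB : ∀ x, PB x =
      (((WithLp.equiv 2 (ℝ × ℝ) x).1 + m * (WithLp.equiv 2 (ℝ × ℝ) x).2) / (1 + m ^ 2)) •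
        (WithLp.equiv 2 (ℝ × ℝ)).symm (1, m))
    (hRA : ∀ x, RA x = (2:ℝ) • PA x - x)
    (hRB : ∀ x, RB x = (2:ℝ) • PB x - x)
    (hT : ∀ x, T x = (2:ℝ)⁻¹ • (RB (RA x) + x))
    (V : WithLp 2 (ℝ × ℝ) → ℝ)
    (hV : ∀ x, V x =
      ((WithLp.equiv 2 (ℝ × ℝ) x).1 ^ 2 + (WithLp.equiv 2 (ℝ × ℝ) x).2 ^ 2) / 2)
    (x : WithLp 2 (ℝ × ℝ)) :
    ⟪gradient V (T x), x - T x⟫ = 0 := by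
  have hV' : V = fun y : WithLp 2 (ℝ × ℝ) => (⟪y, y⟫ : ℝ) / 2 := by
    funext y
    rw [hV, WithLp.prod_inner_apply]
    simp [RCLike.inner_apply]
  have hgrad : gradient V (T x) = T x := by
    rw [hV']
    exact (grad_half_inner (T x)).gradient
  rw [hgrad]
  have hM : (1 + m ^ 2) ≠ 0 := by positivity
  rw [WithLp.prod_inner_apply]
  have hTx : T x = (WithLp.equiv 2 (ℝ × ℝ)).symm
      ((x.ofLp.1 - m * x.ofLp.2) / (1 + m ^ 2),
       m * ((x.ofLp.1 - m * x.ofLp.2) / (1 + m ^ 2)) + x.ofLp.2) := by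
    rw [hT, hRB, hPB, hRA, hPA]
    apply (WithLp.equiv 2 (ℝ × ℝ)).injective
    ext <;> simp <;> field_simp <;> ring
  rw [hTx]
  simp [RCLike.inner_apply]
  field_simp
  ring
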